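/- Let d be the largest real root of x³ − 2x² − x + 1, let e = d² − d − 1, and set r₁ = −d² + 2d + 1, r₂ = −d² + d + 2, r₃ = −d² + d + 3. Then the symmetric 3×3 matrix U with rows (1/d, √e/d, √d/d), (√e/d, e·r₁/d, √(e/d)·r₂), (√d/d, √(e/d)·r₂, r₃) satisfies U² = I. -/

import Mathlib

set_option maxHeartbeats 1000000

theorem stmt_11 (d e r₁ r₂ r₃ : ℝ)
    (hroot : d ^ 3 - 2 * d ^ 2 - d + 1 = 0)
    (hmax : ∀ x : ℝ, x ^ 3 - 2 * x ^ 2 - x + 1 = 0 → x ≤ d)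
    (he : e = d ^ 2 - d - 1)
    (hr₁ : r₁ = -d ^ 2 + 2 * d + 1)
    (hr₂ : r₂ = -d ^ 2 + d + 2)
    (hr₃ : r₃ = -d ^ 2 + d + 3)
    (U : Matrix (Fin 3) (Fin 3) ℝ)
    (hU : U = Matrix.of
      ![![1 / d, Real.sqrt e / d, Real.sqrt d / d],
        ![Real.sqrt e / d, e * r₁ / d, Real.sqrt (e / d) * r₂],
        ![Real.sqrt d / d, Real.sqrt (e / d) * r₂, r₃]]) :
    U * U = 1 := by
  -- d > 2 via intermediate value theorem
  have hd2 : (2.2 : ℝ) ≤ d := by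
    have hcont : ContinuousOn (fun x : ℝ => x ^ 3 - 2 * x ^ 2 - x + 1) (Set.Icc 2.2 2.3) := by
      fun_prop
    have h := intermediate_value_Icc (by norm_num : (2.2:ℝ) ≤ 2.3) hcont
    have h0 : (0:ℝ) ∈ Set.Icc ((2.2:ℝ)^3 - 2*(2.2:ℝ)^2 - 2.2 + 1) ((2.3:ℝ)^3 - 2*(2.3:ℝ)^2 - 2.3 + 1) := by
      constructor <;> norm_num
    obtain ⟨x, hx, hfx⟩ := h h0
    exact le_trans hx.1 (hmax x hfx)
  have hd0 : (0:ℝ) < d := by linarith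
  have hdne : d ≠ 0 := ne_of_gt hd0
  have he0 : (0:ℝ) ≤ e := by nlinarith
  set s := Real.sqrt e with hsdef
  set t := Real.sqrt d with htdef
  have hs2 : s ^ 2 = e := Real.sq_sqrt he0
  have ht2 : t ^ 2 = d := Real.sq_sqrt hd0.le
  have ht0 : (0:ℝ) < t := Real.sqrt_pos.mpr hd0
  have htne : t ≠ 0 := ne_of_gt ht0
  have hu : Real.sqrt (e / d) = s / t := Real.sqrt_div he0 d
  subst hU he hr₁ hr₂ hr₃
  ext i j
  fin_cases i <;> fin_cases j <;>
    simp [Matrix.mul_apply, Fin.sum_univ_three, Matrix.one_apply, hu] <;>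
    field_simp
  · linear_combination ht2 + hs2
  · linear_combination (-d*s) * hroot
  · linear_combination (1+3*d+d^2-d^3) * ht2 + (2*d+d^2-d^3) * hs2 + (-d^2-d) * hroot
  · linear_combination (-d*s) * hroot
  · linear_combination (1+s^2+6*d+8*d^2-6*d^3-16*d^4+6*d^5+9*d^6-6*d^7+d^8) * ht2 +
      (d+4*d^2+4*d^3-3*d^4-2*d^5+d^6) * hs2 + (d^2+2*d^3+d^4-3*d^5+d^6) * hroot
  · linear_combination s * ht2 + ((d^4-d^3-2*d^2-d)*s) * hroot
  · linear_combination (1+3*d+d^2-d^3) * ht2 + (2*d+d^2-d^3) * hs2 + (-d^2-d) * hroot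
  · linear_combination s * ht2 + ((d^4-d^3-2*d^2-d)*s) * hroot
  · linear_combination (t^2+d+8*d^2+6*d^3-5*d^4-2*d^5+d^6) * ht2 +
      (4*d^2+4*d^3-3*d^4-2*d^5+d^6) * hs2 + (-3*d^2-3*d^3+d^5) * hroot
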